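/- Let n ≥ 2. The center of the Lie algebra 𝔤₋ = {Σ_{i=-p}^{-1} λⁱ Pᵢ : Pᵢᵀ = (-1)^{i+1}Pᵢ, Pᵢ ∈ glₙ(𝕂)} (with bracket [P,Q]ₖ = Σ_{i+j=k}[Pᵢ,Qⱼ], truncating all terms with λ-degree ≥ 0) is exactly the span of the elements λ^{-(2s+1)} E for s ≥ 0, where E is the identity matrix. -/

import Mathlib

/-- The twisted loop algebra condition: the `i`-th coefficient `Pᵢ` of a matrix-valued
Laurent polynomial satisfies `Pᵢᵀ = (-1)^(i+1) Pᵢ`. -/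
def twistedCondition {n : ℕ} {K : Type*} [Field K]
    (P : LaurentPolynomial (Matrix (Fin n) (Fin n) K)) : Prop :=
  ∀ i : ℤ, (P.coeff i).transpose = ((-1 : K) ^ (i + 1)) • (P.coeff i)

open Matrix

/-- Membership in the negative part `𝔤₋` of the twisted loop algebra. -/
def memMinus {n : ℕ} {K : Type*} [Field K]
    (P : LaurentPolynomial (Matrix (Fin n) (Fin n) K)) : Prop :=
  twistedCondition P ∧ ∀ i : ℤ, 0 ≤ i → P.coeff i = 0

/-- The center of `𝔤₋` is exactly the span of the elements `λ^{-(2s+1)} E`, `s ≥ 0`.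
(For elements of `𝔤₋`, the commutator has only λ-degrees `≤ -2`, so the truncated
bracket coincides with the honest commutator.) -/
theorem stmt_9 {n : ℕ} {K : Type*} [Field K] [CharZero K] (hn : 2 ≤ n)
    (Z : LaurentPolynomial (Matrix (Fin n) (Fin n) K)) (hZ : memMinus Z) :
    (∀ P : LaurentPolynomial (Matrix (Fin n) (Fin n) K),
        memMinus P → Z * P - P * Z = 0) ↔
    Z ∈ Submodule.span K
      {X : LaurentPolynomial (Matrix (Fin n) (Fin n) K) |
        ∃ s : ℕ, X = AddMonoidAlgebra.ofCoeff (Finsupp.single (-(2 * (s : ℤ) + 1)) (1 : Matrix (Fin n) (Fin n) K))} := by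
  constructor
  · intro h
    -- Step 1: each coefficient of `Z` commutes with suitable matrices
    have key : ∀ (d : ℤ), d < 0 → ∀ (A : Matrix (Fin n) (Fin n) K),
        Aᵀ = ((-1 : K) ^ (d + 1)) • A → ∀ i : ℤ, Z.coeff i * A = A * Z.coeff i := by
      intro d hd A hA i
      set S : LaurentPolynomial (Matrix (Fin n) (Fin n) K) := AddMonoidAlgebra.ofCoeff (Finsupp.single d A) with hS
      have hmem : memMinus S := by
        constructor
        · intro j
          rcases eq_or_ne d j with rfl | hdj
          · rw [hS, AddMonoidAlgebra.coeff_ofCoeff, Finsupp.single_eq_same]; exact hA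
          · rw [hS, AddMonoidAlgebra.coeff_ofCoeff, Finsupp.single_eq_of_ne hdj.symm, Matrix.transpose_zero, smul_zero]
        · intro j hj
          rw [hS, AddMonoidAlgebra.coeff_ofCoeff]; exact Finsupp.single_eq_of_ne (by omega)
      have h2 : Z * S = S * Z := sub_eq_zero.mp (h _ hmem)
      have h3 : (Z * S).coeff (i + d) = (S * Z).coeff (i + d) := by rw [h2]
      rw [hS] at h3
      rw [AddMonoidAlgebra.ofCoeff_single, AddMonoidAlgebra.coeff_mul_single_apply,
        AddMonoidAlgebra.coeff_single_mul_apply,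
        add_neg_cancel_right] at h3
      have hi' : -d + (i + d) = i := by ring
      rwa [hi'] at h3
    -- Step 2: each coefficient commutes with every matrix
    have hall : ∀ (i : ℤ) (M : Matrix (Fin n) (Fin n) K), Z.coeff i * M = M * Z.coeff i := by
      intro i M
      set A : Matrix (Fin n) (Fin n) K := (2⁻¹ : K) • (M + Mᵀ) with hAdef
      set B : Matrix (Fin n) (Fin n) K := (2⁻¹ : K) • (M - Mᵀ) with hBdef
      have hAsym : Aᵀ = ((-1 : K) ^ ((-1 : ℤ) + 1)) • A := by
        simp [hAdef, Matrix.transpose_smul, Matrix.transpose_add, add_comm]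
      have hBanti : Bᵀ = ((-1 : K) ^ ((-2 : ℤ) + 1)) • B := by
        have : ((-1 : K) ^ ((-2 : ℤ) + 1)) = -1 := by norm_num
        rw [this]
        simp [hBdef, Matrix.transpose_smul, Matrix.transpose_sub, smul_sub]
        module
      have h1 := key (-1) (by norm_num) A hAsym i
      have h2 := key (-2) (by norm_num) B hBanti i
      have hM : M = A + B := by
        rw [hAdef, hBdef, ← smul_add]
        have : (M + Mᵀ) + (M - Mᵀ) = (2 : K) • M := by module
        rw [this, smul_smul, inv_mul_cancel₀ (two_ne_zero), one_smul]
      rw [hM, mul_add, add_mul, h1, h2]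
    -- Step 3: each coefficient is scalar
    have hscal : ∀ i : ℤ, ∃ c : K, Z.coeff i = c • (1 : Matrix (Fin n) (Fin n) K) := by
      intro i
      obtain ⟨c, hc⟩ := Matrix.mem_range_scalar_of_commute_single
        (M := Z.coeff i) (fun a b _ => (hall i _).symm)
      refine ⟨c, ?_⟩
      rw [← hc, Matrix.scalar_apply, Matrix.smul_one_eq_diagonal]
    -- Step 4: even coefficients vanish
    have heven : ∀ i : ℤ, Even i → Z.coeff i = 0 := by
      intro i hi
      obtain ⟨c, hc⟩ := hscal i
      have ht := hZ.1 i
      have hodd : Odd (i + 1) := by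
        rcases hi with ⟨m, hm⟩; exact ⟨m, by omega⟩
      rw [Odd.neg_one_zpow hodd, hc] at ht
      have hcc : c = -c := by
        have := congrFun (congrFun ht ⟨0, by omega⟩) ⟨0, by omega⟩
        simpa [Matrix.transpose_apply, Matrix.smul_apply, Matrix.one_apply] using this
      have hc0 : c = 0 := by
        have h2 : (2 : K) * c = 0 := by linear_combination hcc
        rcases mul_eq_zero.mp h2 with h | h
        · exact absurd h two_ne_zero
        · exact h
      rw [hc, hc0, zero_smul]
    -- Step 5: assemble span membership
    have hdecomp : Z = ∑ i ∈ Z.coeff.support, AddMonoidAlgebra.single i (Z.coeff i) := by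
      apply AddMonoidAlgebra.coeff_injective
      rw [AddMonoidAlgebra.coeff_sum]
      exact (Finsupp.sum_single Z.coeff).symm
    rw [hdecomp]
    refine Submodule.sum_mem _ fun i hi => ?_
    have hne : Z.coeff i ≠ 0 := Finsupp.mem_support_iff.mp hi
    obtain ⟨c, hc⟩ := hscal i
    have hneg : i < 0 := lt_of_not_ge fun hge => hne (hZ.2 i hge)
    have hodd : Odd i := by
      by_contra hev
      exact hne (heven i (Int.not_odd_iff_even.mp hev))
    obtain ⟨m, hm⟩ := hodd
    have hi_eq : i = -(2 * (((-m - 1).toNat : ℤ)) + 1) := by omega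
    have hmem : (AddMonoidAlgebra.ofCoeff (Finsupp.single i (1 : Matrix (Fin n) (Fin n) K))) ∈
        {X : LaurentPolynomial (Matrix (Fin n) (Fin n) K) |
          ∃ s : ℕ, X = AddMonoidAlgebra.ofCoeff (Finsupp.single (-(2 * (s : ℤ) + 1)) (1 : Matrix (Fin n) (Fin n) K))} :=
      ⟨(-m - 1).toNat, by rw [← hi_eq]⟩
    have hsingle : AddMonoidAlgebra.single i (Z.coeff i) =
        c • AddMonoidAlgebra.ofCoeff (Finsupp.single i (1 : Matrix (Fin n) (Fin n) K)) := by
      rw [hc, AddMonoidAlgebra.ofCoeff_single, AddMonoidAlgebra.smul_single]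
    rw [hsingle]
    exact Submodule.smul_mem _ c (Submodule.subset_span hmem)
  · intro hmem P hP
    have hcen : ∀ z ∈ Submodule.span K
        {X : LaurentPolynomial (Matrix (Fin n) (Fin n) K) |
          ∃ s : ℕ, X = AddMonoidAlgebra.ofCoeff (Finsupp.single (-(2 * (s : ℤ) + 1)) (1 : Matrix (Fin n) (Fin n) K))},
        Commute z P := by
      intro z hz
      induction hz using Submodule.span_induction with
      | mem x hx =>
        obtain ⟨s, rfl⟩ := hx
        exact LaurentPolynomial.commute_T _ P
      | zero => exact Commute.zero_left P
      | add a b _ _ ha hb => exact ha.add_left hb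
      | smul c a _ ha => exact ha.smul_left c
    rw [sub_eq_zero]
    exact (hcen Z hmem).eq
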